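/- Let $R>0$, let $\kappa$ be a Borel probability measure on $[-R,R]$, and let $h\colon [-R,R]\to[0,\infty)$ be Lipschitz with constant $L$, non-increasing on $[-R,0]$, non-decreasing on $[0,R]$, with $h(0)=0$. Let $\overline{s}=\int_{[-R,R]} s\,d\kappa(s)$ and $\overline{h}=\int_{[-R,R]} h(s)\,d\kappa(s)$. Then $h(\overline{s})^2 \le L R\, \overline{h}$. -/

import Mathlib

open MeasureTheory Filter Topology
open scoped ENNReal NNReal

private lemma aesm_of_continuousOn (R : ℝ) (κ : Measure ℝ)
    (hκ : κ ((Set.Icc (-R) R)ᶜ) = 0) {f : ℝ → ℝ}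
    (hf : ContinuousOn f (Set.Icc (-R) R)) : AEStronglyMeasurable f κ := by
  have hmem : ∀ᵐ s ∂κ, s ∈ Set.Icc (-R) R := by
    rw [ae_iff]
    exact hκ
  have := hf.aestronglyMeasurable (μ := κ) measurableSet_Icc
  rwa [Measure.restrict_eq_self_of_ae_mem hmem] at this

private lemma aux_half (R : ℝ) (hR : 0 < R) (κ : Measure ℝ) [IsProbabilityMeasure κ]
    (hκ : κ ((Set.Icc (-R) R)ᶜ) = 0)
    (L : ℝ≥0) (h : ℝ → ℝ)
    (hLip : LipschitzOnWith L h (Set.Icc (-R) R))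
    (hnonneg : ∀ s ∈ Set.Icc (-R) R, 0 ≤ h s)
    (hinc : MonotoneOn h (Set.Icc 0 R))
    (h0 : h 0 = 0) (hsb : 0 ≤ ∫ s, s ∂κ) :
    (h (∫ s, s ∂κ)) ^ 2 ≤ (L : ℝ) * R * ∫ s, h s ∂κ := by
  have hmem : ∀ᵐ s ∂κ, s ∈ Set.Icc (-R) R := by
    rw [ae_iff]
    exact hκ
  set sb := ∫ s, s ∂κ with hsb_def
  have hint_id : Integrable (fun s => s) κ := by
    refine Integrable.mono' (integrable_const R) aestronglyMeasurable_id ?_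
    filter_upwards [hmem] with s hs
    rw [Real.norm_eq_abs]
    exact abs_le.2 ⟨hs.1, hs.2⟩
  have hsb_le : sb ≤ R := by
    have := integral_mono_ae hint_id (integrable_const R)
      (by filter_upwards [hmem] with s hs using hs.2)
    simpa using this
  have hsb_mem : sb ∈ Set.Icc (-R) R := ⟨le_trans (by linarith) hsb, hsb_le⟩
  set a := h sb with ha_def
  have ha0 : 0 ≤ a := hnonneg sb hsb_mem
  have h0mem : (0:ℝ) ∈ Set.Icc (-R) R := ⟨by linarith, le_of_lt hR⟩
  have haL : a ≤ (L:ℝ) * sb := by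
    have := hLip.dist_le_mul sb hsb_mem 0 h0mem
    rw [h0, Real.dist_eq, Real.dist_eq, sub_zero, sub_zero, abs_of_nonneg hsb] at this
    exact le_trans (le_abs_self a) this
  -- integrability of h
  have hhb : ∀ᵐ s ∂κ, ‖h s‖ ≤ (L:ℝ) * R := by
    filter_upwards [hmem] with s hs
    have := hLip.dist_le_mul s hs 0 h0mem
    rw [h0, Real.dist_eq, Real.dist_eq, sub_zero, sub_zero] at this
    rw [Real.norm_eq_abs]
    exact le_trans this (by
      have : |s| ≤ R := abs_le.2 ⟨hs.1, hs.2⟩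
      nlinarith [L.coe_nonneg])
  have hint_h : Integrable h κ :=
    Integrable.mono' (integrable_const ((L:ℝ) * R))
      (aesm_of_continuousOn R κ hκ hLip.continuousOn) hhb
  have hbar0 : 0 ≤ ∫ s, h s ∂κ :=
    integral_nonneg_of_ae (by filter_upwards [hmem] with s hs using hnonneg s hs)
  -- pointwise inequality
  have hbound : ∀ᵐ s ∂κ,
      a ^ 2 - a * (L:ℝ) * (sb - s) ≤ (a + (L:ℝ) * (R - sb)) * h s := by
    filter_upwards [hmem] with s hs
    have hhn : 0 ≤ h s := hnonneg s hs
    have hsR : s ≤ R := hs.2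
    rcases le_total s sb with hc | hc
    · have hlip2 : a - (L:ℝ) * (sb - s) ≤ h s := by
        have := hLip.dist_le_mul sb hsb_mem s hs
        rw [Real.dist_eq, Real.dist_eq, abs_of_nonneg (by linarith : (0:ℝ) ≤ sb - s)] at this
        have := le_trans (le_abs_self (a - h s)) this
        linarith
      nlinarith [mul_le_mul_of_nonneg_left hlip2 ha0,
        mul_nonneg (mul_nonneg L.coe_nonneg (by linarith : (0:ℝ) ≤ R - sb)) hhn]
    · have hge : a ≤ h s :=
        hinc ⟨hsb, hsb_le⟩ ⟨le_trans hsb hc, hsR⟩ hc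
      nlinarith [mul_le_mul_of_nonneg_left hge ha0,
        mul_le_mul_of_nonneg_left hge (mul_nonneg L.coe_nonneg
          (by linarith : (0:ℝ) ≤ R - sb)),
        mul_nonneg (mul_nonneg L.coe_nonneg (by linarith : (0:ℝ) ≤ R - s)) ha0]
  -- integrate
  have hint_lhs : Integrable (fun s => a ^ 2 - a * (L:ℝ) * (sb - s)) κ := by
    apply Integrable.sub (integrable_const _)
    exact ((integrable_const sb).sub hint_id).const_mul _
  have hint_rhs : Integrable (fun s => (a + (L:ℝ) * (R - sb)) * h s) κ :=
    hint_h.const_mul _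
  have key := integral_mono_ae hint_lhs hint_rhs hbound
  have hintA : Integrable (fun s : ℝ => a * (L:ℝ) * (sb - s)) κ := by
    have hA : Integrable (fun s : ℝ => sb - s) κ := (integrable_const sb).sub hint_id
    exact hA.const_mul _
  rw [integral_sub (integrable_const _) hintA, integral_const_mul,
    integral_sub (integrable_const sb) hint_id, integral_const, integral_const] at key
  simp only [measure_univ, probReal_univ, ENNReal.toReal_one, one_smul, smul_eq_mul, one_mul,
    ← hsb_def] at key
  rw [integral_const_mul] at key
  have key2 : a ^ 2 ≤ (a + (L:ℝ) * (R - sb)) * ∫ s, h s ∂κ := by nlinarith [key]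
  nlinarith [mul_le_mul_of_nonneg_right
    (by linarith : a + (L:ℝ) * (R - sb) ≤ (L:ℝ) * R) hbar0]

/-- If `κ` is a Borel probability measure on `[-R,R]`, `h` is a nonnegative Lipschitz
(constant `L`) function, non-increasing on `[-R,0]`, non-decreasing on `[0,R]`, with
`h 0 = 0`, then `h(s̄)^2 ≤ L R h̄` where `s̄, h̄` are the κ-means of the identity and of `h`. -/
theorem stmt0 (R : ℝ) (hR : 0 < R) (κ : Measure ℝ) [IsProbabilityMeasure κ]
    (hκ : κ ((Set.Icc (-R) R)ᶜ) = 0)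
    (L : ℝ≥0) (h : ℝ → ℝ)
    (hLip : LipschitzOnWith L h (Set.Icc (-R) R))
    (hnonneg : ∀ s ∈ Set.Icc (-R) R, 0 ≤ h s)
    (hdec : AntitoneOn h (Set.Icc (-R) 0))
    (hinc : MonotoneOn h (Set.Icc 0 R))
    (h0 : h 0 = 0) :
    (h (∫ s, s ∂κ)) ^ 2 ≤ (L : ℝ) * R * ∫ s, h s ∂κ := by
  rcases le_or_gt 0 (∫ s, s ∂κ) with hpos | hneg
  · exact aux_half R hR κ hκ L h hLip hnonneg hinc h0 hpos
  · -- reflect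
    set κ' := κ.map (fun s => -s) with hκ'_def
    have hmeas : Measurable (fun s : ℝ => -s) := measurable_neg
    haveI : IsProbabilityMeasure κ' := Measure.isProbabilityMeasure_map hmeas.aemeasurable
    have hpre : (fun s : ℝ => -s) ⁻¹' (Set.Icc (-R) R) = Set.Icc (-R) R := by
      ext x
      simp only [Set.mem_preimage, Set.mem_Icc]
      constructor <;> rintro ⟨h1, h2⟩ <;> constructor <;> linarith
    have hκ' : κ' ((Set.Icc (-R) R)ᶜ) = 0 := by
      rw [hκ'_def, Measure.map_apply hmeas measurableSet_Icc.compl,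
        Set.preimage_compl, hpre]
      exact hκ
    have hmem' : ∀ s : ℝ, s ∈ Set.Icc (-R) R → -s ∈ Set.Icc (-R) R := by
      intro s hs
      exact ⟨by linarith [hs.2], by linarith [hs.1]⟩
    have hLip' : LipschitzOnWith L (fun s => h (-s)) (Set.Icc (-R) R) := by
      intro x hx y hy
      simpa [edist_neg_neg] using hLip (hmem' x hx) (hmem' y hy)
    have hnonneg' : ∀ s ∈ Set.Icc (-R) R, 0 ≤ h (-s) := fun s hs =>
      hnonneg (-s) (hmem' s hs)
    have hinc' : MonotoneOn (fun s => h (-s)) (Set.Icc 0 R) := by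
      intro x hx y hy hxy
      exact hdec ⟨by linarith [hy.2], by linarith [hy.1]⟩
        ⟨by linarith [hx.2], by linarith [hx.1]⟩ (by linarith)
    have hid' : ∫ s, s ∂κ' = - ∫ s, s ∂κ := by
      rw [hκ'_def, integral_map hmeas.aemeasurable measurable_id'.aestronglyMeasurable]
      exact integral_neg _
    have hsb' : 0 ≤ ∫ s, s ∂κ' := by rw [hid']; linarith
    have haesm : AEStronglyMeasurable (fun s => h (-s)) κ' :=
      aesm_of_continuousOn R κ' hκ' hLip'.continuousOn
    have hh' : ∫ s, h (-s) ∂κ' = ∫ s, h s ∂κ := by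
      rw [hκ'_def, integral_map hmeas.aemeasurable haesm]
      simp
    have := aux_half R hR κ' hκ' L (fun s => h (-s)) hLip' hnonneg' hinc'
      (by simpa using h0) hsb'
    rw [hh', hid'] at this
    simpa using this
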